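/- arXiv:0901.1070 — 2 statements merged into one kernel-verified Lean document; each statement's English description precedes it below -/
import Mathlib

section
/- Conformal invariance of the teleparallel Lagrangian: for every continuously differentiable coframe ϑ on U and every continuously differentiable h : U → ℝ, λ(e^{−2h} l, e^{h} m, e^{4h} n) = λ(l, m, n) at every point of U. -/
noncomputable section

open scoped Matrix

/-- Points of ℝ⁴. -/
abbrev Pt : Type := Fin 4 → ℝ

/-- Partial derivative ∂_α of a function on ℝ⁴. -/
def pd {E : Type*} [NormedAddCommGroup E] [NormedSpace ℝ E]
    (α : Fin 4) (f : Pt → E) (x : Pt) : E :=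
  fderiv ℝ f x (Pi.single α 1)

/-- o_{jk} = o^{jk} = diag(1,-1,-1,-1). -/
def oM : Fin 4 → Fin 4 → ℝ := fun j k => if j = k then (if j = 0 then 1 else -1) else 0

/-- Totally antisymmetric symbol, ε_{0123} = 1. -/
def eps (a b c d : Fin 4) : ℝ :=
  ∑ σ : Equiv.Perm (Fin 4),
    if σ 0 = a ∧ σ 1 = b ∧ σ 2 = c ∧ σ 3 = d then ((Equiv.Perm.sign σ : ℤ) : ℝ) else 0

/-- Determinant det(ϑ^j_α) of a coframe. -/
def cofDet (ϑ : Fin 4 → Pt → Fin 4 → ℝ) (x : Pt) : ℝ :=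
  Matrix.det (Matrix.of fun j α => ϑ j x α)

/-- l := ϑ⁰ + ϑ³. -/
def lC (ϑ : Fin 4 → Pt → Fin 4 → ℝ) (x : Pt) (α : Fin 4) : ℂ :=
  (ϑ 0 x α : ℂ) + (ϑ 3 x α : ℂ)

/-- m := ϑ¹ + iϑ². -/
def mC (ϑ : Fin 4 → Pt → Fin 4 → ℝ) (x : Pt) (α : Fin 4) : ℂ :=
  (ϑ 1 x α : ℂ) + Complex.I * (ϑ 2 x α : ℂ)

/-- n := ϑ⁰ - ϑ³. -/
def nC (ϑ : Fin 4 → Pt → Fin 4 → ℝ) (x : Pt) (α : Fin 4) : ℂ :=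
  (ϑ 0 x α : ℂ) - (ϑ 3 x α : ℂ)

/-- The teleparallel Lagrangian density
λ(l,m,n) := (1/6) ε^{αβγδ} l_α (n_β ∂_γ l_δ − m̄_β ∂_γ m_δ − m_β ∂_γ m̄_δ). -/
def lam (l m n : Pt → Fin 4 → ℂ) (x : Pt) : ℂ :=
  (1/6 : ℂ) * ∑ α : Fin 4, ∑ β : Fin 4, ∑ γ : Fin 4, ∑ δ : Fin 4,
    (eps α β γ δ : ℂ) * l x α *
      (n x β * pd γ (fun y => l y δ) x
        - (starRingEnd ℂ) (m x β) * pd γ (fun y => m y δ) x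
        - m x β * pd γ (fun y => (starRingEnd ℂ) (m y δ)) x)

/-- (du)_{αβ} := ∂_α u_β − ∂_β u_α. -/
def dcov (u : Pt → Fin 4 → ℝ) (α β : Fin 4) (x : Pt) : ℝ :=
  pd α (fun y => u y β) x - pd β (fun y => u y α) x

/-- Axial torsion T^ax(ϑ)_{αβγ}. -/
def Tax (ϑ : Fin 4 → Pt → Fin 4 → ℝ) (α β γ : Fin 4) (x : Pt) : ℝ :=
  (1/3 : ℝ) * ∑ j : Fin 4, ∑ k : Fin 4, oM j k *
    (ϑ j x α * dcov (ϑ k) β γ x + ϑ j x β * dcov (ϑ k) γ α x + ϑ j x γ * dcov (ϑ k) α β x)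

/-- Metric g_{αβ} := o_{jk} ϑ^j_α ϑ^k_β. -/
def gmat (ϑ : Fin 4 → Pt → Fin 4 → ℝ) (x : Pt) : Matrix (Fin 4) (Fin 4) ℝ :=
  Matrix.of fun α β => ∑ j : Fin 4, ∑ k : Fin 4, oM j k * ϑ j x α * ϑ k x β

/-- Inverse metric g^{αβ}. -/
def ginv (ϑ : Fin 4 → Pt → Fin 4 → ℝ) (x : Pt) : Matrix (Fin 4) (Fin 4) ℝ :=
  (gmat ϑ x)⁻¹

/-- Christoffel symbols Γ^β_{αγ}. -/
def Chr (ϑ : Fin 4 → Pt → Fin 4 → ℝ) (β α γ : Fin 4) (x : Pt) : ℝ :=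
  (1/2 : ℝ) * ∑ δ : Fin 4, ginv ϑ x β δ *
    (pd α (fun y => gmat ϑ y γ δ) x + pd γ (fun y => gmat ϑ y α δ) x
      - pd δ (fun y => gmat ϑ y α γ) x)

/-- Levi-Civita covariant derivative ∇_α u_β of a complex covector field. -/
def covC (ϑ : Fin 4 → Pt → Fin 4 → ℝ) (u : Pt → Fin 4 → ℂ) (α β : Fin 4) (x : Pt) : ℂ :=
  pd α (fun y => u y β) x - ∑ γ : Fin 4, (Chr ϑ γ α β x : ℂ) * u x γ

/-- Levi-Civita covariant derivative ∇_γ F_{αβ} of a complex 2-form. -/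
def covF (ϑ : Fin 4 → Pt → Fin 4 → ℝ) (F : Pt → Fin 4 → Fin 4 → ℂ) (γ α β : Fin 4) (x : Pt) : ℂ :=
  pd γ (fun y => F y α β) x - ∑ δ : Fin 4, (Chr ϑ δ γ α x : ℂ) * F x δ β
    - ∑ δ : Fin 4, (Chr ϑ δ γ β x : ℂ) * F x α δ

/-- The 2-form (l∧m)_{αβ}. -/
def lmForm (ϑ : Fin 4 → Pt → Fin 4 → ℝ) (x : Pt) (α β : Fin 4) : ℂ :=
  lC ϑ x α * mC ϑ x β - lC ϑ x β * mC ϑ x α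

/-- The Griffiths–Newing covector v_α := ∇^β (l∧m)_{αβ} − m^β ∇_α l_β. -/
def vGN (ϑ : Fin 4 → Pt → Fin 4 → ℝ) (α : Fin 4) (x : Pt) : ℂ :=
  (∑ β : Fin 4, ∑ γ : Fin 4, (ginv ϑ x β γ : ℂ) * covF ϑ (fun y a b => lmForm ϑ y a b) γ α β x)
  - ∑ β : Fin 4, ∑ γ : Fin 4, (ginv ϑ x β γ : ℂ) * mC ϑ x γ * covC ϑ (fun y b => lC ϑ y b) α β x

/-- l^α := g^{αβ} l_β. -/
def lup (ϑ : Fin 4 → Pt → Fin 4 → ℝ) (x : Pt) (α : Fin 4) : ℂ :=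
  ∑ β : Fin 4, (ginv ϑ x α β : ℂ) * lC ϑ x β

/-- Divergence ∇_α l^α := ∂_α l^α + Γ^α_{αγ} l^γ. -/
def divl (ϑ : Fin 4 → Pt → Fin 4 → ℝ) (x : Pt) : ℂ :=
  ∑ α : Fin 4, (pd α (fun y => lup ϑ y α) x
    + ∑ γ : Fin 4, (Chr ϑ α α γ x : ℂ) * lup ϑ x γ)

/-- Components of the 4-form L_tele(ϑ) = l ∧ T^ax. -/
def LteleForm (ϑ : Fin 4 → Pt → Fin 4 → ℝ) (α β γ δ : Fin 4) (x : Pt) : ℂ :=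
  lC ϑ x α * (Tax ϑ β γ δ x : ℂ) - lC ϑ x β * (Tax ϑ α γ δ x : ℂ)
    + lC ϑ x γ * (Tax ϑ α β δ x : ℂ) - lC ϑ x δ * (Tax ϑ α β γ x : ℂ)

/-- Hodge star of a complex 4-form: ★F := (1/24) √|det g| F^{αβγδ} ε_{αβγδ}. -/
def star4C (ϑ : Fin 4 → Pt → Fin 4 → ℝ) (F : Fin 4 → Fin 4 → Fin 4 → Fin 4 → ℂ) (x : Pt) : ℂ :=
  (1/24 : ℂ) * (cofDet ϑ x : ℂ) *
    ∑ α : Fin 4, ∑ β : Fin 4, ∑ γ : Fin 4, ∑ δ : Fin 4,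
      ∑ α' : Fin 4, ∑ β' : Fin 4, ∑ γ' : Fin 4, ∑ δ' : Fin 4,
        (ginv ϑ x α α' : ℂ) * (ginv ϑ x β β' : ℂ) * (ginv ϑ x γ γ' : ℂ) * (ginv ϑ x δ δ' : ℂ) *
          F α' β' γ' δ' * (eps α β γ δ : ℂ)

/-- Hodge star of a real 4-form. -/
def star4 (ϑ : Fin 4 → Pt → Fin 4 → ℝ) (F : Fin 4 → Fin 4 → Fin 4 → Fin 4 → ℝ) (x : Pt) : ℝ :=
  (1/24 : ℝ) * cofDet ϑ x *
    ∑ α : Fin 4, ∑ β : Fin 4, ∑ γ : Fin 4, ∑ δ : Fin 4,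
      ∑ α' : Fin 4, ∑ β' : Fin 4, ∑ γ' : Fin 4, ∑ δ' : Fin 4,
        ginv ϑ x α α' * ginv ϑ x β β' * ginv ϑ x γ γ' * ginv ϑ x δ δ' *
          F α' β' γ' δ' * eps α β γ δ

/-- ★L_tele(ϑ). -/
def starLtele (ϑ : Fin 4 → Pt → Fin 4 → ℝ) (x : Pt) : ℂ :=
  star4C ϑ (fun α β γ δ => LteleForm ϑ α β γ δ x) x


section AuxLemmas

lemma eps_swap_aux (i j : Fin 4) (hij : i ≠ j) (p q : Fin 4 → Fin 4)
    (hp : ∀ σ : Equiv.Perm (Fin 4), (σ 0 = p 0 ∧ σ 1 = p 1 ∧ σ 2 = p 2 ∧ σ 3 = p 3) ↔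
      (σ (Equiv.swap i j 0) = q 0 ∧ σ (Equiv.swap i j 1) = q 1 ∧ σ (Equiv.swap i j 2) = q 2 ∧ σ (Equiv.swap i j 3) = q 3)) :
    eps (p 0) (p 1) (p 2) (p 3) = - eps (q 0) (q 1) (q 2) (q 3) := by
  unfold eps
  rw [← Finset.sum_neg_distrib]
  refine Fintype.sum_equiv (Equiv.mulRight (Equiv.swap i j)) _ _ ?_
  intro σ
  by_cases hc : σ 0 = p 0 ∧ σ 1 = p 1 ∧ σ 2 = p 2 ∧ σ 3 = p 3
  · rw [if_pos hc, if_pos]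
    · simp [Equiv.Perm.sign_mul, Equiv.Perm.sign_swap hij]
    · simp only [Equiv.coe_mulRight, Equiv.Perm.mul_apply]
      exact (hp σ).mp hc
  · rw [if_neg hc, if_neg, neg_zero]
    simp only [Equiv.coe_mulRight, Equiv.Perm.mul_apply]
    exact fun h => hc ((hp σ).mpr h)

lemma eps_swap03 (a b c d : Fin 4) : eps a b c d = - eps d b c a := by
  have := eps_swap_aux 0 3 (by decide) ![a,b,c,d] ![d,b,c,a] (fun σ => by
    rw [Equiv.swap_apply_left, Equiv.swap_apply_right,
      Equiv.swap_apply_of_ne_of_ne (by decide) (by decide),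
      Equiv.swap_apply_of_ne_of_ne (by decide) (by decide)]
    simp only [Matrix.cons_val_zero, Matrix.cons_val_one, Matrix.head_cons]
    constructor <;> (intro h; refine ⟨?_, ?_, ?_, ?_⟩ <;> tauto))
  simpa using this

lemma eps_swap13 (a b c d : Fin 4) : eps a b c d = - eps a d c b := by
  have := eps_swap_aux 1 3 (by decide) ![a,b,c,d] ![a,d,c,b] (fun σ => by
    rw [Equiv.swap_apply_left, Equiv.swap_apply_right,
      Equiv.swap_apply_of_ne_of_ne (by decide) (by decide),
      Equiv.swap_apply_of_ne_of_ne (by decide) (by decide)]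
    simp only [Matrix.cons_val_zero, Matrix.cons_val_one, Matrix.head_cons]
    constructor <;> (intro h; refine ⟨?_, ?_, ?_, ?_⟩ <;> tauto))
  simpa using this

lemma sum4_swap03 {M : Type*} [AddCommMonoid M] (G : Fin 4 → Fin 4 → Fin 4 → Fin 4 → M) :
    (∑ a : Fin 4, ∑ b : Fin 4, ∑ c : Fin 4, ∑ d : Fin 4, G a b c d)
      = ∑ a : Fin 4, ∑ b : Fin 4, ∑ c : Fin 4, ∑ d : Fin 4, G d b c a := by
  calc (∑ a : Fin 4, ∑ b : Fin 4, ∑ c : Fin 4, ∑ d : Fin 4, G a b c d)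
      = ∑ a : Fin 4, ∑ b : Fin 4, ∑ d : Fin 4, ∑ c : Fin 4, G a b c d :=
        Finset.sum_congr rfl fun _ _ => Finset.sum_congr rfl fun _ _ => Finset.sum_comm
    _ = ∑ a : Fin 4, ∑ d : Fin 4, ∑ b : Fin 4, ∑ c : Fin 4, G a b c d :=
        Finset.sum_congr rfl fun _ _ => Finset.sum_comm
    _ = ∑ d : Fin 4, ∑ a : Fin 4, ∑ b : Fin 4, ∑ c : Fin 4, G a b c d := Finset.sum_comm
    _ = ∑ d : Fin 4, ∑ b : Fin 4, ∑ a : Fin 4, ∑ c : Fin 4, G a b c d :=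
        Finset.sum_congr rfl fun _ _ => Finset.sum_comm
    _ = ∑ d : Fin 4, ∑ b : Fin 4, ∑ c : Fin 4, ∑ a : Fin 4, G a b c d :=
        Finset.sum_congr rfl fun _ _ => Finset.sum_congr rfl fun _ _ => Finset.sum_comm

lemma sum4_swap13 {M : Type*} [AddCommMonoid M] (G : Fin 4 → Fin 4 → Fin 4 → Fin 4 → M) :
    (∑ a : Fin 4, ∑ b : Fin 4, ∑ c : Fin 4, ∑ d : Fin 4, G a b c d)
      = ∑ a : Fin 4, ∑ b : Fin 4, ∑ c : Fin 4, ∑ d : Fin 4, G a d c b := by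
  calc (∑ a : Fin 4, ∑ b : Fin 4, ∑ c : Fin 4, ∑ d : Fin 4, G a b c d)
      = ∑ a : Fin 4, ∑ b : Fin 4, ∑ d : Fin 4, ∑ c : Fin 4, G a b c d :=
        Finset.sum_congr rfl fun _ _ => Finset.sum_congr rfl fun _ _ => Finset.sum_comm
    _ = ∑ a : Fin 4, ∑ d : Fin 4, ∑ b : Fin 4, ∑ c : Fin 4, G a b c d :=
        Finset.sum_congr rfl fun _ _ => Finset.sum_comm
    _ = ∑ a : Fin 4, ∑ d : Fin 4, ∑ c : Fin 4, ∑ b : Fin 4, G a b c d :=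
        Finset.sum_congr rfl fun _ _ => Finset.sum_congr rfl fun _ _ => Finset.sum_comm

lemma sum4_zero_of_neg {G : Fin 4 → Fin 4 → Fin 4 → Fin 4 → ℂ}
    (h : (∑ a : Fin 4, ∑ b : Fin 4, ∑ c : Fin 4, ∑ d : Fin 4, G a b c d)
      = -(∑ a : Fin 4, ∑ b : Fin 4, ∑ c : Fin 4, ∑ d : Fin 4, G a b c d)) :
    (∑ a : Fin 4, ∑ b : Fin 4, ∑ c : Fin 4, ∑ d : Fin 4, G a b c d) = 0 := by
  have h2 : (∑ a : Fin 4, ∑ b : Fin 4, ∑ c : Fin 4, ∑ d : Fin 4, G a b c d)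
      + (∑ a : Fin 4, ∑ b : Fin 4, ∑ c : Fin 4, ∑ d : Fin 4, G a b c d) = 0 :=
    eq_neg_iff_add_eq_zero.mp h
  exact add_self_eq_zero.mp h2

lemma pd_mul (f g : Pt → ℂ) (x : Pt) (γ : Fin 4)
    (hf : DifferentiableAt ℝ f x) (hg : DifferentiableAt ℝ g x) :
    pd γ (fun y => f y * g y) x = f x * pd γ g x + pd γ f x * g x := by
  unfold pd
  rw [fderiv_fun_mul hf hg]
  simp [smul_eq_mul]
  ring

lemma pd_exp_c (g : Pt → ℝ) (x : Pt) (γ : Fin 4) (hg : DifferentiableAt ℝ g x) :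
    pd γ (fun y => ((Real.exp (g y) : ℝ) : ℂ)) x = ((Real.exp (g x) * pd γ g x : ℝ) : ℂ) := by
  unfold pd
  have h3 : HasFDerivAt (fun y => Real.exp (g y)) (Real.exp (g x) • fderiv ℝ g x) x :=
    (Real.hasDerivAt_exp (g x)).comp_hasFDerivAt x hg.hasFDerivAt
  have h4 : HasFDerivAt (fun y => ((Real.exp (g y) : ℝ) : ℂ))
      (Complex.ofRealCLM.comp (Real.exp (g x) • fderiv ℝ g x)) x :=
    Complex.ofRealCLM.hasFDerivAt.comp x h3
  rw [h4.fderiv]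
  simp [smul_eq_mul]

lemma diff_exp_c (g : Pt → ℝ) (x : Pt) (hg : DifferentiableAt ℝ g x) :
    DifferentiableAt ℝ (fun y => ((Real.exp (g y) : ℝ) : ℂ)) x :=
  Complex.ofRealCLM.differentiableAt.comp x (Real.differentiable_exp.differentiableAt.comp x hg)

lemma pd_exp_mul (g : Pt → ℝ) (f : Pt → ℂ) (x : Pt) (γ : Fin 4)
    (hg : DifferentiableAt ℝ g x) (hf : DifferentiableAt ℝ f x) :
    pd γ (fun y => ((Real.exp (g y) : ℝ) : ℂ) * f y) x
      = ((Real.exp (g x) : ℝ) : ℂ) * (pd γ f x + ((pd γ g x : ℝ) : ℂ) * f x) := by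
  rw [pd_mul _ _ _ _ (diff_exp_c g x hg) hf, pd_exp_c g x γ hg]
  push_cast
  ring

lemma diff_conj (f : Pt → ℂ) (x : Pt) (hf : DifferentiableAt ℝ f x) :
    DifferentiableAt ℝ (fun y => (starRingEnd ℂ) (f y)) x := by
  have : (fun y => (starRingEnd ℂ) (f y)) = fun y => Complex.conjCLE.toContinuousLinearMap (f y) := by
    funext y; simp
  rw [this]
  exact Complex.conjCLE.toContinuousLinearMap.differentiableAt.comp x hf

lemma pd_const_mul (c : ℝ) (g : Pt → ℝ) (x : Pt) (γ : Fin 4) (hg : DifferentiableAt ℝ g x) :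
    pd γ (fun y => c * g y) x = c * pd γ g x := by
  unfold pd
  rw [fderiv_const_mul hg]
  simp

end AuxLemmas

/-- Conformal invariance of the teleparallel Lagrangian:
λ(e^{−2h} l, e^{h} m, e^{4h} n) = λ(l, m, n). -/
theorem teleparallel_lagrangian_conformal_invariance
    (U : Set Pt) (hU : IsOpen U) (ϑ : Fin 4 → Pt → Fin 4 → ℝ)
    (hreg : ∀ j, ContDiffOn ℝ 1 (ϑ j) U)
    (hdet : ∀ x ∈ U, 0 < cofDet ϑ x)
    (h : Pt → ℝ) (hh : ContDiffOn ℝ 1 h U) :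
    ∀ x ∈ U,
      lam (fun y α => (Real.exp (-2 * h y) : ℂ) * lC ϑ y α)
        (fun y α => (Real.exp (h y) : ℂ) * mC ϑ y α)
        (fun y α => (Real.exp (4 * h y) : ℂ) * nC ϑ y α) x
      = lam (fun y α => lC ϑ y α) (fun y α => mC ϑ y α) (fun y α => nC ϑ y α) x:= by
  intro x hx
  have hhx : DifferentiableAt ℝ h x :=
    ((hh.contDiffAt (hU.mem_nhds hx)).differentiableAt one_ne_zero)
  have hg2 : DifferentiableAt ℝ (fun y => -2 * h y) x := hhx.const_mul (-2)
  have hθ : ∀ j (δ : Fin 4), DifferentiableAt ℝ (fun y => ϑ j y δ) x := by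
    intro j δ
    have h1 : DifferentiableAt ℝ (ϑ j) x :=
      ((hreg j).contDiffAt (hU.mem_nhds hx)).differentiableAt one_ne_zero
    exact (differentiableAt_pi.mp h1) δ
  have hCθ : ∀ j (δ : Fin 4), DifferentiableAt ℝ (fun y => ((ϑ j y δ : ℝ) : ℂ)) x := fun j δ =>
    Complex.ofRealCLM.differentiableAt.comp x (hθ j δ)
  have hlD : ∀ δ : Fin 4, DifferentiableAt ℝ (fun y => lC ϑ y δ) x := fun δ =>
    (hCθ 0 δ).add (hCθ 3 δ)
  have hmD : ∀ δ : Fin 4, DifferentiableAt ℝ (fun y => mC ϑ y δ) x := fun δ =>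
    (hCθ 1 δ).add ((hCθ 2 δ).const_mul Complex.I)
  have hmbD : ∀ δ : Fin 4, DifferentiableAt ℝ (fun y => (starRingEnd ℂ) (mC ϑ y δ)) x := fun δ =>
    diff_conj _ x (hmD δ)
  have hconjeq : ∀ δ : Fin 4,
      (fun y => (starRingEnd ℂ) (((Real.exp (h y) : ℝ) : ℂ) * mC ϑ y δ))
        = fun y => ((Real.exp (h y) : ℝ) : ℂ) * (starRingEnd ℂ) (mC ϑ y δ) := by
    intro δ; funext y; rw [map_mul, Complex.conj_ofReal]
  have E1' : ((Real.exp (-2 * h x) : ℝ) : ℂ) * ((Real.exp (4 * h x) : ℝ) : ℂ)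
      * ((Real.exp (-2 * h x) : ℝ) : ℂ) = 1 := by
    rw [← Complex.ofReal_mul, ← Complex.ofReal_mul, ← Real.exp_add, ← Real.exp_add,
      show -2 * h x + 4 * h x + -2 * h x = 0 from by ring, Real.exp_zero, Complex.ofReal_one]
  have E2' : ((Real.exp (-2 * h x) : ℝ) : ℂ) * ((Real.exp (h x) : ℝ) : ℂ)
      * ((Real.exp (h x) : ℝ) : ℂ) = 1 := by
    rw [← Complex.ofReal_mul, ← Complex.ofReal_mul, ← Real.exp_add, ← Real.exp_add,
      show -2 * h x + h x + h x = 0 from by ring, Real.exp_zero, Complex.ofReal_one]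
  -- the vanishing extra sums
  have S1 : (∑ a : Fin 4, ∑ b : Fin 4, ∑ c : Fin 4, ∑ d : Fin 4,
      (eps a b c d : ℂ) * ((pd c h x : ℝ) : ℂ) * lC ϑ x a * nC ϑ x b * lC ϑ x d) = 0 := by
    apply sum4_zero_of_neg
    conv_lhs => rw [sum4_swap03 (fun a b c d => (eps a b c d : ℂ) * ((pd c h x : ℝ) : ℂ)
      * lC ϑ x a * nC ϑ x b * lC ϑ x d)]
    simp only [← Finset.sum_neg_distrib]
    refine Finset.sum_congr rfl fun a _ => Finset.sum_congr rfl fun b _ =>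
      Finset.sum_congr rfl fun c _ => Finset.sum_congr rfl fun d _ => ?_
    rw [eps_swap03 d b c a]
    push_cast
    ring
  have S23 : (∑ a : Fin 4, ∑ b : Fin 4, ∑ c : Fin 4, ∑ d : Fin 4,
      (eps a b c d : ℂ) * ((pd c h x : ℝ) : ℂ) *
        (lC ϑ x a * (starRingEnd ℂ) (mC ϑ x b) * mC ϑ x d
          + lC ϑ x a * mC ϑ x b * (starRingEnd ℂ) (mC ϑ x d))) = 0 := by
    apply sum4_zero_of_neg
    conv_lhs => rw [sum4_swap13 (fun a b c d => (eps a b c d : ℂ) * ((pd c h x : ℝ) : ℂ) *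
        (lC ϑ x a * (starRingEnd ℂ) (mC ϑ x b) * mC ϑ x d
          + lC ϑ x a * mC ϑ x b * (starRingEnd ℂ) (mC ϑ x d)))]
    simp only [← Finset.sum_neg_distrib]
    refine Finset.sum_congr rfl fun a _ => Finset.sum_congr rfl fun b _ =>
      Finset.sum_congr rfl fun c _ => Finset.sum_congr rfl fun d _ => ?_
    rw [eps_swap13 a d c b]
    push_cast
    ring
  have hX0 : (∑ a : Fin 4, ∑ b : Fin 4, ∑ c : Fin 4, ∑ d : Fin 4,
      (eps a b c d : ℂ) * ((pd c h x : ℝ) : ℂ) *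
        ((-2) * lC ϑ x a * nC ϑ x b * lC ϑ x d
          - lC ϑ x a * (starRingEnd ℂ) (mC ϑ x b) * mC ϑ x d
          - lC ϑ x a * mC ϑ x b * (starRingEnd ℂ) (mC ϑ x d))) = 0 := by
    have hsplit : (∑ a : Fin 4, ∑ b : Fin 4, ∑ c : Fin 4, ∑ d : Fin 4,
        (eps a b c d : ℂ) * ((pd c h x : ℝ) : ℂ) *
          ((-2) * lC ϑ x a * nC ϑ x b * lC ϑ x d
            - lC ϑ x a * (starRingEnd ℂ) (mC ϑ x b) * mC ϑ x d
            - lC ϑ x a * mC ϑ x b * (starRingEnd ℂ) (mC ϑ x d)))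
        = (∑ a : Fin 4, ∑ b : Fin 4, ∑ c : Fin 4, ∑ d : Fin 4,
            ((-2 : ℂ) * ((eps a b c d : ℂ) * ((pd c h x : ℝ) : ℂ)
              * lC ϑ x a * nC ϑ x b * lC ϑ x d)
            + (-1 : ℂ) * ((eps a b c d : ℂ) * ((pd c h x : ℝ) : ℂ) *
              (lC ϑ x a * (starRingEnd ℂ) (mC ϑ x b) * mC ϑ x d
                + lC ϑ x a * mC ϑ x b * (starRingEnd ℂ) (mC ϑ x d))))) := by
      refine Finset.sum_congr rfl fun a _ => Finset.sum_congr rfl fun b _ =>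
        Finset.sum_congr rfl fun c _ => Finset.sum_congr rfl fun d _ => ?_
      ring
    rw [hsplit]
    simp only [Finset.sum_add_distrib, ← Finset.mul_sum]
    rw [S1, S23]
    ring
  simp only [lam]
  congr 1
  have hmain : ∀ α β γ δ : Fin 4,
      (eps α β γ δ : ℂ) * (((Real.exp (-2 * h x) : ℝ) : ℂ) * lC ϑ x α) *
        (((Real.exp (4 * h x) : ℝ) : ℂ) * nC ϑ x β
            * pd γ (fun y => ((Real.exp (-2 * h y) : ℝ) : ℂ) * lC ϑ y δ) x
          - (starRingEnd ℂ) (((Real.exp (h x) : ℝ) : ℂ) * mC ϑ x β)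
            * pd γ (fun y => ((Real.exp (h y) : ℝ) : ℂ) * mC ϑ y δ) x
          - ((Real.exp (h x) : ℝ) : ℂ) * mC ϑ x β
            * pd γ (fun y => (starRingEnd ℂ) (((Real.exp (h y) : ℝ) : ℂ) * mC ϑ y δ)) x)
      = (eps α β γ δ : ℂ) * lC ϑ x α *
          (nC ϑ x β * pd γ (fun y => lC ϑ y δ) x
            - (starRingEnd ℂ) (mC ϑ x β) * pd γ (fun y => mC ϑ y δ) x
            - mC ϑ x β * pd γ (fun y => (starRingEnd ℂ) (mC ϑ y δ)) x)
        + (eps α β γ δ : ℂ) * ((pd γ h x : ℝ) : ℂ) *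
          ((-2) * lC ϑ x α * nC ϑ x β * lC ϑ x δ
            - lC ϑ x α * (starRingEnd ℂ) (mC ϑ x β) * mC ϑ x δ
            - lC ϑ x α * mC ϑ x β * (starRingEnd ℂ) (mC ϑ x δ)) := by
    intro α β γ δ
    rw [hconjeq δ]
    rw [pd_exp_mul (fun y => -2 * h y) (fun y => lC ϑ y δ) x γ hg2 (hlD δ)]
    rw [pd_exp_mul h (fun y => mC ϑ y δ) x γ hhx (hmD δ)]
    rw [pd_exp_mul h (fun y => (starRingEnd ℂ) (mC ϑ y δ)) x γ hhx (hmbD δ)]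
    rw [pd_const_mul (-2) h x γ hhx]
    rw [map_mul, Complex.conj_ofReal]
    push_cast [-Complex.ofReal_exp]
    linear_combination
      ((eps α β γ δ : ℂ) * lC ϑ x α * nC ϑ x β *
        (pd γ (fun y => lC ϑ y δ) x - 2 * ((pd γ h x : ℝ) : ℂ) * lC ϑ x δ)) * E1'
      - ((eps α β γ δ : ℂ) * lC ϑ x α *
          ((starRingEnd ℂ) (mC ϑ x β) *
              (pd γ (fun y => mC ϑ y δ) x + ((pd γ h x : ℝ) : ℂ) * mC ϑ x δ)
            + mC ϑ x β *
              (pd γ (fun y => (starRingEnd ℂ) (mC ϑ y δ)) x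
                + ((pd γ h x : ℝ) : ℂ) * (starRingEnd ℂ) (mC ϑ x δ)))) * E2'
  calc (∑ α : Fin 4, ∑ β : Fin 4, ∑ γ : Fin 4, ∑ δ : Fin 4,
        (eps α β γ δ : ℂ) * (((Real.exp (-2 * h x) : ℝ) : ℂ) * lC ϑ x α) *
          (((Real.exp (4 * h x) : ℝ) : ℂ) * nC ϑ x β
              * pd γ (fun y => ((Real.exp (-2 * h y) : ℝ) : ℂ) * lC ϑ y δ) x
            - (starRingEnd ℂ) (((Real.exp (h x) : ℝ) : ℂ) * mC ϑ x β)
              * pd γ (fun y => ((Real.exp (h y) : ℝ) : ℂ) * mC ϑ y δ) x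
            - ((Real.exp (h x) : ℝ) : ℂ) * mC ϑ x β
              * pd γ (fun y => (starRingEnd ℂ) (((Real.exp (h y) : ℝ) : ℂ) * mC ϑ y δ)) x))
      = ∑ α : Fin 4, ∑ β : Fin 4, ∑ γ : Fin 4, ∑ δ : Fin 4,
          ((eps α β γ δ : ℂ) * lC ϑ x α *
            (nC ϑ x β * pd γ (fun y => lC ϑ y δ) x
              - (starRingEnd ℂ) (mC ϑ x β) * pd γ (fun y => mC ϑ y δ) x
              - mC ϑ x β * pd γ (fun y => (starRingEnd ℂ) (mC ϑ y δ)) x)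
          + (eps α β γ δ : ℂ) * ((pd γ h x : ℝ) : ℂ) *
            ((-2) * lC ϑ x α * nC ϑ x β * lC ϑ x δ
              - lC ϑ x α * (starRingEnd ℂ) (mC ϑ x β) * mC ϑ x δ
              - lC ϑ x α * mC ϑ x β * (starRingEnd ℂ) (mC ϑ x δ))) := by
        refine Finset.sum_congr rfl fun α _ => Finset.sum_congr rfl fun β _ =>
          Finset.sum_congr rfl fun γ _ => Finset.sum_congr rfl fun δ _ => hmain α β γ δ
    _ = ∑ α : Fin 4, ∑ β : Fin 4, ∑ γ : Fin 4, ∑ δ : Fin 4,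
          (eps α β γ δ : ℂ) * lC ϑ x α *
            (nC ϑ x β * pd γ (fun y => lC ϑ y δ) x
              - (starRingEnd ℂ) (mC ϑ x β) * pd γ (fun y => mC ϑ y δ) x
              - mC ϑ x β * pd γ (fun y => (starRingEnd ℂ) (mC ϑ y δ)) x) := by
        simp only [Finset.sum_add_distrib]
        rw [hX0, add_zero]
end
end

section
/- Theorem 3 (gauge invariance of the modified teleparallel Lagrangian): Let ϑ be a continuously differentiable coframe on U and let s : U → (0,∞) be continuously differentiable. Then the density s·λ(l,m,n) of the modified teleparallel Lagrangian L̃_tele(ϑ,s) := s·l∧T^ax is invariant under the extended gauge group H̃; explicitly: (i) for every constant φ ∈ ℝ and continuously differentiable f : U → ℂ, s·λ(l, e^{iφ} m + f l, n + f e^{−iφ} m̄ + f̄ e^{iφ} m + |f|² l) = s·λ(l, m, n); and (ii) for every continuously differentiable k : U → ℝ, (e^{k} s)·λ(e^{−k} l, m, e^{k} n) = s·λ(l, m, n), both at every point of U. -/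
noncomputable section

open scoped Matrix

open Finset in
private lemma aux_sum_antisymm_zero (g : Fin 4 → Fin 4 → ℂ) (h : ∀ a b, g a b = - g b a) :
    ∑ a : Fin 4, ∑ b : Fin 4, g a b = 0 := by
  have h2 : (∑ a : Fin 4, ∑ b : Fin 4, g a b) = -(∑ a : Fin 4, ∑ b : Fin 4, g a b) := by
    calc (∑ a : Fin 4, ∑ b : Fin 4, g a b)
        = ∑ b : Fin 4, ∑ a : Fin 4, g a b := Finset.sum_comm
      _ = ∑ b : Fin 4, ∑ a : Fin 4, -(g b a) := by
          exact Finset.sum_congr rfl fun b _ => Finset.sum_congr rfl fun a _ => h a b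
      _ = -(∑ b : Fin 4, ∑ a : Fin 4, g b a) := by
          simp [Finset.sum_neg_distrib]
  linear_combination h2 / 2

private lemma aux_eps_swap12 (a b c d : Fin 4) : eps b a c d = - eps a b c d := by
  unfold eps
  rw [← Finset.sum_neg_distrib]
  refine Fintype.sum_equiv (Equiv.mulRight (Equiv.swap (0:Fin 4) 1)) _ _ fun σ => ?_
  simp only [Equiv.coe_mulRight]
  have h0 : (σ * Equiv.swap (0:Fin 4) 1) 0 = σ 1 := by
    simp [Equiv.Perm.mul_apply]
  have h1 : (σ * Equiv.swap (0:Fin 4) 1) 1 = σ 0 := by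
    simp [Equiv.Perm.mul_apply]
  have h2 : (σ * Equiv.swap (0:Fin 4) 1) 2 = σ 2 := by
    simp [Equiv.Perm.mul_apply, Equiv.swap_apply_of_ne_of_ne (by decide : (2:Fin 4) ≠ 0)
      (by decide : (2:Fin 4) ≠ 1)]
  have h3 : (σ * Equiv.swap (0:Fin 4) 1) 3 = σ 3 := by
    simp [Equiv.Perm.mul_apply, Equiv.swap_apply_of_ne_of_ne (by decide : (3:Fin 4) ≠ 0)
      (by decide : (3:Fin 4) ≠ 1)]
  have hs : ((Equiv.Perm.sign (σ * Equiv.swap (0:Fin 4) 1) : ℤ) : ℝ)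
      = -((Equiv.Perm.sign σ : ℤ) : ℝ) := by
    simp [Equiv.Perm.sign_mul, Equiv.Perm.sign_swap (by decide : (0:Fin 4) ≠ 1)]
  simp only [h0, h1, h2, h3, hs]
  rw [if_congr (show (σ 1 = a ∧ σ 0 = b ∧ σ 2 = c ∧ σ 3 = d)
    ↔ (σ 0 = b ∧ σ 1 = a ∧ σ 2 = c ∧ σ 3 = d) by tauto) rfl rfl]
  split_ifs <;> ring

private lemma aux_eps_swap14 (a b c d : Fin 4) : eps d b c a = - eps a b c d := by
  unfold eps
  rw [← Finset.sum_neg_distrib]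
  refine Fintype.sum_equiv (Equiv.mulRight (Equiv.swap (0:Fin 4) 3)) _ _ fun σ => ?_
  simp only [Equiv.coe_mulRight]
  have h0 : (σ * Equiv.swap (0:Fin 4) 3) 0 = σ 3 := by
    simp [Equiv.Perm.mul_apply]
  have h3 : (σ * Equiv.swap (0:Fin 4) 3) 3 = σ 0 := by
    simp [Equiv.Perm.mul_apply]
  have h1 : (σ * Equiv.swap (0:Fin 4) 3) 1 = σ 1 := by
    simp [Equiv.Perm.mul_apply, Equiv.swap_apply_of_ne_of_ne (by decide : (1:Fin 4) ≠ 0)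
      (by decide : (1:Fin 4) ≠ 3)]
  have h2 : (σ * Equiv.swap (0:Fin 4) 3) 2 = σ 2 := by
    simp [Equiv.Perm.mul_apply, Equiv.swap_apply_of_ne_of_ne (by decide : (2:Fin 4) ≠ 0)
      (by decide : (2:Fin 4) ≠ 3)]
  have hs : ((Equiv.Perm.sign (σ * Equiv.swap (0:Fin 4) 3) : ℤ) : ℝ)
      = -((Equiv.Perm.sign σ : ℤ) : ℝ) := by
    simp [Equiv.Perm.sign_mul, Equiv.Perm.sign_swap (by decide : (0:Fin 4) ≠ 3)]
  simp only [h0, h1, h2, h3, hs]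
  rw [if_congr (show (σ 3 = a ∧ σ 1 = b ∧ σ 2 = c ∧ σ 0 = d)
    ↔ (σ 0 = d ∧ σ 1 = b ∧ σ 2 = c ∧ σ 3 = a) by tauto) rfl rfl]
  split_ifs <;> ring

private lemma aux_quad12 (L : Fin 4 → ℂ) (W : Fin 4 → Fin 4 → ℂ) :
    ∑ a : Fin 4, ∑ b : Fin 4, ∑ c : Fin 4, ∑ d : Fin 4,
      (eps a b c d : ℂ) * (L a * L b * W c d) = 0 := by
  refine aux_sum_antisymm_zero _ fun a b => ?_
  calc (∑ c : Fin 4, ∑ d : Fin 4, (eps a b c d : ℂ) * (L a * L b * W c d))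
      = ∑ c : Fin 4, ∑ d : Fin 4, -((eps b a c d : ℂ) * (L b * L a * W c d)) := by
        refine Finset.sum_congr rfl fun c _ => Finset.sum_congr rfl fun d _ => ?_
        rw [aux_eps_swap12 a b c d]
        push_cast
        ring
    _ = -(∑ c : Fin 4, ∑ d : Fin 4, (eps b a c d : ℂ) * (L b * L a * W c d)) := by
        simp [Finset.sum_neg_distrib]

private lemma aux_quad14 (L : Fin 4 → ℂ) (V : Fin 4 → Fin 4 → ℂ) :
    ∑ a : Fin 4, ∑ b : Fin 4, ∑ c : Fin 4, ∑ d : Fin 4,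
      (eps a b c d : ℂ) * (L a * L d * V b c) = 0 := by
  have step : ∀ b c : Fin 4,
      ∑ a : Fin 4, ∑ d : Fin 4, (eps a b c d : ℂ) * (L a * L d * V b c) = 0 := by
    intro b c
    refine aux_sum_antisymm_zero _ fun a d => ?_
    rw [aux_eps_swap14 a b c d]
    push_cast
    ring
  calc (∑ a : Fin 4, ∑ b : Fin 4, ∑ c : Fin 4, ∑ d : Fin 4,
        (eps a b c d : ℂ) * (L a * L d * V b c))
      = ∑ b : Fin 4, ∑ a : Fin 4, ∑ c : Fin 4, ∑ d : Fin 4,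
        (eps a b c d : ℂ) * (L a * L d * V b c) := Finset.sum_comm
    _ = ∑ b : Fin 4, ∑ c : Fin 4, ∑ a : Fin 4, ∑ d : Fin 4,
        (eps a b c d : ℂ) * (L a * L d * V b c) := by
        exact Finset.sum_congr rfl fun b _ => Finset.sum_comm
    _ = 0 := by
        refine Finset.sum_eq_zero fun b _ => Finset.sum_eq_zero fun c _ => step b c

private lemma aux_gauge1_sum (A B F Fb : ℂ) (hAB : A * B = 1)
    (L M Mb N DF DFb : Fin 4 → ℂ) (DL DM DMb : Fin 4 → Fin 4 → ℂ) :
    (∑ a : Fin 4, ∑ b : Fin 4, ∑ c : Fin 4, ∑ d : Fin 4, (eps a b c d : ℂ) * L a *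
      ((N b + F * B * Mb b + Fb * A * M b + F * Fb * L b) * DL c d
        - (B * Mb b + Fb * L b) * (A * DM c d + DF c * L d + F * DL c d)
        - (A * M b + F * L b) * (B * DMb c d + DFb c * L d + Fb * DL c d)))
    = ∑ a : Fin 4, ∑ b : Fin 4, ∑ c : Fin 4, ∑ d : Fin 4, (eps a b c d : ℂ) * L a *
      (N b * DL c d - Mb b * DM c d - M b * DMb c d) := by
  have hz1 := aux_quad12 L (fun c d => -(F * Fb * DL c d) - Fb * A * DM c d - F * B * DMb c d
    - (Fb * DF c + F * DFb c) * L d)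
  have hz2 := aux_quad14 L (fun b c => -(B * DF c * Mb b) - A * DFb c * M b)
  calc (∑ a : Fin 4, ∑ b : Fin 4, ∑ c : Fin 4, ∑ d : Fin 4, (eps a b c d : ℂ) * L a *
      ((N b + F * B * Mb b + Fb * A * M b + F * Fb * L b) * DL c d
        - (B * Mb b + Fb * L b) * (A * DM c d + DF c * L d + F * DL c d)
        - (A * M b + F * L b) * (B * DMb c d + DFb c * L d + Fb * DL c d)))
      = ∑ a : Fin 4, ∑ b : Fin 4, ∑ c : Fin 4, ∑ d : Fin 4,
        ((eps a b c d : ℂ) * L a * (N b * DL c d - Mb b * DM c d - M b * DMb c d)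
          + (eps a b c d : ℂ) * (L a * L b * (-(F * Fb * DL c d) - Fb * A * DM c d
              - F * B * DMb c d - (Fb * DF c + F * DFb c) * L d))
          + (eps a b c d : ℂ) * (L a * L d * (-(B * DF c * Mb b) - A * DFb c * M b))) := by
        refine Finset.sum_congr rfl fun a _ => Finset.sum_congr rfl fun b _ =>
          Finset.sum_congr rfl fun c _ => Finset.sum_congr rfl fun d _ => ?_
        linear_combination (-(eps a b c d : ℂ) * L a * (Mb b * DM c d + M b * DMb c d)) * hAB
    _ = (∑ a : Fin 4, ∑ b : Fin 4, ∑ c : Fin 4, ∑ d : Fin 4, (eps a b c d : ℂ) * L a *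
          (N b * DL c d - Mb b * DM c d - M b * DMb c d))
        + (∑ a : Fin 4, ∑ b : Fin 4, ∑ c : Fin 4, ∑ d : Fin 4,
          (eps a b c d : ℂ) * (L a * L b * (-(F * Fb * DL c d) - Fb * A * DM c d
              - F * B * DMb c d - (Fb * DF c + F * DFb c) * L d)))
        + (∑ a : Fin 4, ∑ b : Fin 4, ∑ c : Fin 4, ∑ d : Fin 4,
          (eps a b c d : ℂ) * (L a * L d * (-(B * DF c * Mb b) - A * DFb c * M b))) := by
        simp [Finset.sum_add_distrib]
    _ = ∑ a : Fin 4, ∑ b : Fin 4, ∑ c : Fin 4, ∑ d : Fin 4, (eps a b c d : ℂ) * L a *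
          (N b * DL c d - Mb b * DM c d - M b * DMb c d) := by
        rw [hz1, hz2]; ring

private lemma aux_gauge2_sum (Kx Kix : ℂ) (hK : Kx * Kix = 1) (DK : Fin 4 → ℂ)
    (L M Mb N : Fin 4 → ℂ) (DL DM DMb : Fin 4 → Fin 4 → ℂ) :
    (∑ a : Fin 4, ∑ b : Fin 4, ∑ c : Fin 4, ∑ d : Fin 4, (eps a b c d : ℂ) * (Kx * L a) *
      ((Kix * N b) * (DK c * L d + Kx * DL c d) - Mb b * DM c d - M b * DMb c d))
    = Kx * ∑ a : Fin 4, ∑ b : Fin 4, ∑ c : Fin 4, ∑ d : Fin 4, (eps a b c d : ℂ) * L a *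
      (N b * DL c d - Mb b * DM c d - M b * DMb c d) := by
  have hz := aux_quad14 L (fun b c => N b * DK c)
  calc (∑ a : Fin 4, ∑ b : Fin 4, ∑ c : Fin 4, ∑ d : Fin 4, (eps a b c d : ℂ) * (Kx * L a) *
      ((Kix * N b) * (DK c * L d + Kx * DL c d) - Mb b * DM c d - M b * DMb c d))
      = ∑ a : Fin 4, ∑ b : Fin 4, ∑ c : Fin 4, ∑ d : Fin 4,
        (Kx * ((eps a b c d : ℂ) * L a * (N b * DL c d - Mb b * DM c d - M b * DMb c d))
          + (eps a b c d : ℂ) * (L a * L d * (N b * DK c))) := by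
        refine Finset.sum_congr rfl fun a _ => Finset.sum_congr rfl fun b _ =>
          Finset.sum_congr rfl fun c _ => Finset.sum_congr rfl fun d _ => ?_
        linear_combination ((eps a b c d : ℂ) * L a * N b * (DK c * L d + Kx * DL c d)) * hK
    _ = (Kx * ∑ a : Fin 4, ∑ b : Fin 4, ∑ c : Fin 4, ∑ d : Fin 4,
          (eps a b c d : ℂ) * L a * (N b * DL c d - Mb b * DM c d - M b * DMb c d))
        + ∑ a : Fin 4, ∑ b : Fin 4, ∑ c : Fin 4, ∑ d : Fin 4,
          (eps a b c d : ℂ) * (L a * L d * (N b * DK c)) := by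
        simp [Finset.sum_add_distrib, Finset.mul_sum]
    _ = _ := by rw [hz]; ring

private lemma aux_diff_ofReal {g : Pt → ℝ} {x : Pt} (h : DifferentiableAt ℝ g x) :
    DifferentiableAt ℝ (fun y => (g y : ℂ)) x := by
  have := Complex.ofRealCLM.differentiableAt.comp x h
  simpa [Function.comp_def] using this

private lemma aux_diff_conj {u : Pt → ℂ} {x : Pt} (h : DifferentiableAt ℝ u x) :
    DifferentiableAt ℝ (fun y => (starRingEnd ℂ) (u y)) x := by
  have := Complex.conjCLE.differentiableAt.comp x h
  simpa [Function.comp_def] using this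

private lemma aux_pd_add {u v : Pt → ℂ} {x : Pt} (γ : Fin 4)
    (hu : DifferentiableAt ℝ u x) (hv : DifferentiableAt ℝ v x) :
    pd γ (fun y => u y + v y) x = pd γ u x + pd γ v x := by
  unfold pd
  rw [fderiv_fun_add hu hv]
  simp

private lemma aux_pd_cmul {u : Pt → ℂ} {x : Pt} (γ : Fin 4) (c : ℂ)
    (hu : DifferentiableAt ℝ u x) :
    pd γ (fun y => c * u y) x = c * pd γ u x := by
  unfold pd
  rw [fderiv_const_mul hu c]
  simp

private lemma aux_pd_mul {u v : Pt → ℂ} {x : Pt} (γ : Fin 4)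
    (hu : DifferentiableAt ℝ u x) (hv : DifferentiableAt ℝ v x) :
    pd γ (fun y => u y * v y) x = pd γ u x * v x + u x * pd γ v x := by
  unfold pd
  rw [fderiv_fun_mul hu hv]
  simp [smul_eq_mul]
  ring

private lemma aux_lC_conj (ϑ : Fin 4 → Pt → Fin 4 → ℝ) (y : Pt) (a : Fin 4) :
    (starRingEnd ℂ) (lC ϑ y a) = lC ϑ y a := by
  simp [lC, map_add, Complex.conj_ofReal]

/-- Theorem 3 of the paper: the density s·λ(l,m,n) of the modified teleparallel Lagrangian
is invariant under the extended gauge group H̃. -/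
theorem modified_teleparallel_gauge_invariance
    (U : Set Pt) (hU : IsOpen U) (ϑ : Fin 4 → Pt → Fin 4 → ℝ)
    (hreg : ∀ j, ContDiffOn ℝ 1 (ϑ j) U)
    (hdet : ∀ x ∈ U, 0 < cofDet ϑ x)
    (s : Pt → ℝ) (hs : ContDiffOn ℝ 1 s U) (hspos : ∀ x ∈ U, 0 < s x) :
    (∀ (φ : ℝ) (f : Pt → ℂ), ContDiffOn ℝ 1 f U → ∀ x ∈ U,
      (s x : ℂ) * lam (fun y α => lC ϑ y α)
        (fun y α => Complex.exp (Complex.I * φ) * mC ϑ y α + f y * lC ϑ y α)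
        (fun y α => nC ϑ y α
          + f y * Complex.exp (-(Complex.I * φ)) * (starRingEnd ℂ) (mC ϑ y α)
          + (starRingEnd ℂ) (f y) * Complex.exp (Complex.I * φ) * mC ϑ y α
          + (Complex.normSq (f y) : ℂ) * lC ϑ y α) x
      = (s x : ℂ) * lam (fun y α => lC ϑ y α) (fun y α => mC ϑ y α) (fun y α => nC ϑ y α) x)
    ∧
    (∀ (k : Pt → ℝ), ContDiffOn ℝ 1 k U → ∀ x ∈ U,
      ((Real.exp (k x) * s x : ℝ) : ℂ) * lam (fun y α => (Real.exp (-(k y)) : ℂ) * lC ϑ y α)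
        (fun y α => mC ϑ y α)
        (fun y α => (Real.exp (k y) : ℂ) * nC ϑ y α) x
      = (s x : ℂ) * lam (fun y α => lC ϑ y α) (fun y α => mC ϑ y α) (fun y α => nC ϑ y α) x) := by
  constructor
  · intro φ f hf x hx
    have hxU : U ∈ nhds x := hU.mem_nhds hx
    have hθ : ∀ j δ, DifferentiableAt ℝ (fun y => ϑ j y δ) x := fun j δ =>
      (differentiableAt_pi.mp (((hreg j).contDiffAt hxU).differentiableAt one_ne_zero)) δ
    have hl : ∀ δ, DifferentiableAt ℝ (fun y => lC ϑ y δ) x := fun δ =>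
      (aux_diff_ofReal (hθ 0 δ)).add (aux_diff_ofReal (hθ 3 δ))
    have hm : ∀ δ, DifferentiableAt ℝ (fun y => mC ϑ y δ) x := fun δ =>
      (aux_diff_ofReal (hθ 1 δ)).add ((aux_diff_ofReal (hθ 2 δ)).const_mul Complex.I)
    have hmb : ∀ δ, DifferentiableAt ℝ (fun y => (starRingEnd ℂ) (mC ϑ y δ)) x := fun δ =>
      aux_diff_conj (hm δ)
    have hfA : DifferentiableAt ℝ f x := (hf.contDiffAt hxU).differentiableAt one_ne_zero
    have hfb : DifferentiableAt ℝ (fun y => (starRingEnd ℂ) (f y)) x := aux_diff_conj hfA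
    have hAB : Complex.exp (Complex.I * (φ:ℂ)) * Complex.exp (-(Complex.I * (φ:ℂ))) = 1 := by
      rw [← Complex.exp_add]; simp
    have hconjA : (starRingEnd ℂ) (Complex.exp (Complex.I * (φ:ℂ)))
        = Complex.exp (-(Complex.I * (φ:ℂ))) := by
      rw [← Complex.exp_conj]
      congr 1
      simp [map_mul, Complex.conj_I, Complex.conj_ofReal]
    have hpdm : ∀ (c d : Fin 4),
        pd c (fun y => Complex.exp (Complex.I * (φ:ℂ)) * mC ϑ y d + f y * lC ϑ y d) x
        = Complex.exp (Complex.I * (φ:ℂ)) * pd c (fun y => mC ϑ y d) x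
          + (pd c f x * lC ϑ x d + f x * pd c (fun y => lC ϑ y d) x) := by
      intro c d
      rw [aux_pd_add (v := fun y => f y * lC ϑ y d) c ((hm d).const_mul _) (hfA.mul (hl d)),
        aux_pd_cmul c _ (hm d), aux_pd_mul c hfA (hl d)]
    have hpdmc : ∀ (c d : Fin 4),
        pd c (fun y => (starRingEnd ℂ)
          (Complex.exp (Complex.I * (φ:ℂ)) * mC ϑ y d + f y * lC ϑ y d)) x
        = Complex.exp (-(Complex.I * (φ:ℂ))) * pd c (fun y => (starRingEnd ℂ) (mC ϑ y d)) x
          + (pd c (fun y => (starRingEnd ℂ) (f y)) x * lC ϑ x d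
            + (starRingEnd ℂ) (f x) * pd c (fun y => lC ϑ y d) x) := by
      intro c d
      have hfun : (fun y => (starRingEnd ℂ)
            (Complex.exp (Complex.I * (φ:ℂ)) * mC ϑ y d + f y * lC ϑ y d))
          = fun y => Complex.exp (-(Complex.I * (φ:ℂ))) * (starRingEnd ℂ) (mC ϑ y d)
            + (starRingEnd ℂ) (f y) * lC ϑ y d := by
        funext y
        rw [map_add, map_mul, map_mul, hconjA, aux_lC_conj]
      rw [hfun, aux_pd_add (v := fun y => (starRingEnd ℂ) (f y) * lC ϑ y d) c ((hmb d).const_mul _) (hfb.mul (hl d)),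
        aux_pd_cmul c _ (hmb d), aux_pd_mul c hfb (hl d)]
    have G1 := aux_gauge1_sum (Complex.exp (Complex.I * (φ:ℂ)))
      (Complex.exp (-(Complex.I * (φ:ℂ)))) (f x) ((starRingEnd ℂ) (f x)) hAB
      (fun a => lC ϑ x a) (fun b => mC ϑ x b) (fun b => (starRingEnd ℂ) (mC ϑ x b))
      (fun b => nC ϑ x b) (fun c => pd c f x)
      (fun c => pd c (fun y => (starRingEnd ℂ) (f y)) x)
      (fun c d => pd c (fun y => lC ϑ y d) x) (fun c d => pd c (fun y => mC ϑ y d) x)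
      (fun c d => pd c (fun y => (starRingEnd ℂ) (mC ϑ y d)) x)
    congr 1
    unfold lam
    congr 1
    refine Eq.trans ?_ G1
    refine Finset.sum_congr rfl fun a _ => Finset.sum_congr rfl fun b _ =>
      Finset.sum_congr rfl fun c _ => Finset.sum_congr rfl fun d _ => ?_
    simp only [hpdm, hpdmc]
    simp only [map_add, map_mul, hconjA, aux_lC_conj, ← Complex.mul_conj]
    ring
  · intro k hk x hx
    have hxU : U ∈ nhds x := hU.mem_nhds hx
    have hθ : ∀ j δ, DifferentiableAt ℝ (fun y => ϑ j y δ) x := fun j δ =>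
      (differentiableAt_pi.mp (((hreg j).contDiffAt hxU).differentiableAt one_ne_zero)) δ
    have hl : ∀ δ, DifferentiableAt ℝ (fun y => lC ϑ y δ) x := fun δ =>
      (aux_diff_ofReal (hθ 0 δ)).add (aux_diff_ofReal (hθ 3 δ))
    have hkA : DifferentiableAt ℝ k x := (hk.contDiffAt hxU).differentiableAt one_ne_zero
    have hK : DifferentiableAt ℝ (fun y => ((Real.exp (-(k y)) : ℝ) : ℂ)) x :=
      aux_diff_ofReal (hkA.neg.exp)
    have hone : ((Real.exp (-(k x)) : ℝ) : ℂ) * ((Real.exp (k x) : ℝ) : ℂ) = 1 := by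
      rw [← Complex.ofReal_mul, ← Real.exp_add]
      simp
    have hpdl : ∀ (c d : Fin 4),
        pd c (fun y => ((Real.exp (-(k y)) : ℝ) : ℂ) * lC ϑ y d) x
        = pd c (fun y => ((Real.exp (-(k y)) : ℝ) : ℂ)) x * lC ϑ x d
          + ((Real.exp (-(k x)) : ℝ) : ℂ) * pd c (fun y => lC ϑ y d) x := fun c d =>
      aux_pd_mul c hK (hl d)
    have G2 := aux_gauge2_sum ((Real.exp (-(k x)) : ℝ) : ℂ) ((Real.exp (k x) : ℝ) : ℂ) hone
      (fun c => pd c (fun y => ((Real.exp (-(k y)) : ℝ) : ℂ)) x)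
      (fun a => lC ϑ x a) (fun b => mC ϑ x b) (fun b => (starRingEnd ℂ) (mC ϑ x b))
      (fun b => nC ϑ x b)
      (fun c d => pd c (fun y => lC ϑ y d) x) (fun c d => pd c (fun y => mC ϑ y d) x)
      (fun c d => pd c (fun y => (starRingEnd ℂ) (mC ϑ y d)) x)
    have hlam2 : lam (fun y α => (Real.exp (-(k y)) : ℂ) * lC ϑ y α)
        (fun y α => mC ϑ y α) (fun y α => (Real.exp (k y) : ℂ) * nC ϑ y α) x
        = ((Real.exp (-(k x)) : ℝ) : ℂ)
          * lam (fun y α => lC ϑ y α) (fun y α => mC ϑ y α) (fun y α => nC ϑ y α) x := by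
      unfold lam
      rw [← mul_assoc, mul_comm ((Real.exp (-(k x)) : ℝ) : ℂ) ((1:ℂ)/6), mul_assoc]
      rw [← G2]
      refine congrArg (HMul.hMul ((1:ℂ)/6)) ?_
      refine Finset.sum_congr rfl fun a _ => Finset.sum_congr rfl fun b _ =>
        Finset.sum_congr rfl fun c _ => Finset.sum_congr rfl fun d _ => ?_
      simp only [hpdl]
    rw [hlam2, Complex.ofReal_mul]
    have hexp : ((Real.exp (k x) : ℝ) : ℂ) * ((Real.exp (-(k x)) : ℝ) : ℂ) = 1 := by
      rw [← Complex.ofReal_mul, ← Real.exp_add]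
      simp
    linear_combination ((s x : ℂ) * lam (fun y α => lC ϑ y α) (fun y α => mC ϑ y α)
      (fun y α => nC ϑ y α) x) * hexp
end
end
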